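/- Let E₁₁, E₁₂, E₂₁, E₂₂ be real numbers with |E₁₁ + E₁₂ + E₂₁ − E₂₂| > 2. Then there do not exist a probability space (Λ, μ) and measurable functions a₁, a₂, b₁, b₂ : Λ → ℝ with |aᵢ(λ)| ≤ 1 and |bⱼ(λ)| ≤ 1 for all λ, such that ∫ aᵢ·bⱼ dμ = Eᵢⱼ for all i, j ∈ {1,2}. -/

import Mathlib

open MeasureTheory

lemma bdd_integrable {Λ : Type} [MeasurableSpace Λ] (μ : Measure Λ)
    [IsProbabilityMeasure μ] (a b : Λ → ℝ) (ha : Measurable a) (hb : Measurable b)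
    (ha1 : ∀ x, |a x| ≤ 1) (hb1 : ∀ x, |b x| ≤ 1) :
    Integrable (fun x => a x * b x) μ := by
  apply Integrable.mono' (integrable_const 1) ((ha.mul hb).aestronglyMeasurable)
  filter_upwards with x
  rw [Real.norm_eq_abs, Pi.mul_apply, abs_mul]
  calc |a x| * |b x| ≤ 1 * 1 :=
        mul_le_mul (ha1 x) (hb1 x) (abs_nonneg _) zero_le_one
    _ = 1 := by ring

lemma chsh_pointwise (p q r s : ℝ) (hp : |p| ≤ 1) (hq : |q| ≤ 1)
    (hr : |r| ≤ 1) (hs : |s| ≤ 1) :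
    |p * r + p * s + q * r - q * s| ≤ 2 := by
  have key : |r + s| + |r - s| ≤ 2 := by
    rw [abs_le] at hr hs
    rcases abs_cases (r + s) with ⟨e1, _⟩ | ⟨e1, _⟩ <;>
      rcases abs_cases (r - s) with ⟨e2, _⟩ | ⟨e2, _⟩ <;> linarith
  calc |p * r + p * s + q * r - q * s|
      = |p * (r + s) + q * (r - s)| := by ring_nf
    _ ≤ |p * (r + s)| + |q * (r - s)| := abs_add_le _ _
    _ = |p| * |r + s| + |q| * |r - s| := by rw [abs_mul, abs_mul]
    _ ≤ 1 * |r + s| + 1 * |r - s| := by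
        exact add_le_add (mul_le_mul_of_nonneg_right hp (abs_nonneg _))
          (mul_le_mul_of_nonneg_right hq (abs_nonneg _))
    _ = |r + s| + |r - s| := by ring
    _ ≤ 2 := key

/-- Correlations violating the CHSH inequality admit no common-cause
(local hidden-variables) explanation. -/
theorem no_common_cause_of_chsh_violation
    (E₁₁ E₁₂ E₂₁ E₂₂ : ℝ) (hviol : |E₁₁ + E₁₂ + E₂₁ - E₂₂| > 2) :
    ¬ ∃ (Λ : Type) (_ : MeasurableSpace Λ) (μ : Measure Λ)
        (_ : IsProbabilityMeasure μ) (a₁ a₂ b₁ b₂ : Λ → ℝ),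
      Measurable a₁ ∧ Measurable a₂ ∧ Measurable b₁ ∧ Measurable b₂ ∧
      (∀ x, |a₁ x| ≤ 1) ∧ (∀ x, |a₂ x| ≤ 1) ∧
      (∀ x, |b₁ x| ≤ 1) ∧ (∀ x, |b₂ x| ≤ 1) ∧
      (∫ x, a₁ x * b₁ x ∂μ) = E₁₁ ∧ (∫ x, a₁ x * b₂ x ∂μ) = E₁₂ ∧
      (∫ x, a₂ x * b₁ x ∂μ) = E₂₁ ∧ (∫ x, a₂ x * b₂ x ∂μ) = E₂₂ := by
  rintro ⟨Λ, mΛ, μ, hprob, a₁, a₂, b₁, b₂, ma₁, ma₂, mb₁, mb₂,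
    ha₁, ha₂, hb₁, hb₂, h11, h12, h21, h22⟩
  have i11 := bdd_integrable μ a₁ b₁ ma₁ mb₁ ha₁ hb₁
  have i12 := bdd_integrable μ a₁ b₂ ma₁ mb₂ ha₁ hb₂
  have i21 := bdd_integrable μ a₂ b₁ ma₂ mb₁ ha₂ hb₁
  have i22 := bdd_integrable μ a₂ b₂ ma₂ mb₂ ha₂ hb₂
  have iA : Integrable (fun x => a₁ x * b₁ x + a₁ x * b₂ x) μ := i11.add i12
  have iB : Integrable (fun x => a₁ x * b₁ x + a₁ x * b₂ x + a₂ x * b₁ x) μ := iA.add i21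
  have hsum : (∫ x, (a₁ x * b₁ x + a₁ x * b₂ x + a₂ x * b₁ x - a₂ x * b₂ x) ∂μ)
      = E₁₁ + E₁₂ + E₂₁ - E₂₂ := by
    rw [integral_sub iB i22, integral_add iA i21, integral_add i11 i12,
        h11, h12, h21, h22]
  have hbound : |∫ x, (a₁ x * b₁ x + a₁ x * b₂ x + a₂ x * b₁ x - a₂ x * b₂ x) ∂μ| ≤ 2 := by
    have hnorm := norm_integral_le_integral_norm
      (μ := μ) (f := fun x => a₁ x * b₁ x + a₁ x * b₂ x + a₂ x * b₁ x - a₂ x * b₂ x)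
    simp only [Real.norm_eq_abs] at hnorm
    refine hnorm.trans ?_
    calc (∫ x, |a₁ x * b₁ x + a₁ x * b₂ x + a₂ x * b₁ x - a₂ x * b₂ x| ∂μ)
        ≤ ∫ _x, (2 : ℝ) ∂μ := by
          apply integral_mono_of_nonneg
          · filter_upwards with x; positivity
          · exact integrable_const 2
          · filter_upwards with x
            exact chsh_pointwise _ _ _ _ (ha₁ x) (ha₂ x) (hb₁ x) (hb₂ x)
      _ = 2 := by simp
  rw [hsum] at hbound
  linarith [hviol]
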